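/- The expected number of internal equilibria tends to infinity as the number of players grows: E(2,d) = ∫_0^∞ f_d(t) dt → +∞ as d → ∞. -/

import Mathlib

open Finset MeasureTheory

/-- `M d t = ∑_{k=0}^{d-1} C(d-1,k)² t^{2k}`. -/
noncomputable def M (d : ℕ) (t : ℝ) : ℝ :=
  ∑ k ∈ Finset.range d, ((d - 1).choose k : ℝ) ^ 2 * t ^ (2 * k)

/-- `A d t = ∑_{k=1}^{d-1} k² C(d-1,k)² t^{2(k-1)}`. -/
noncomputable def A (d : ℕ) (t : ℝ) : ℝ :=
  ∑ k ∈ Finset.Icc 1 (d - 1), (k : ℝ) ^ 2 * ((d - 1).choose k : ℝ) ^ 2 * t ^ (2 * (k - 1))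

/-- `B d t = ∑_{k=1}^{d-1} k C(d-1,k)² t^{2k-1}`. -/
noncomputable def B (d : ℕ) (t : ℝ) : ℝ :=
  ∑ k ∈ Finset.Icc 1 (d - 1), (k : ℝ) * ((d - 1).choose k : ℝ) ^ 2 * t ^ (2 * k - 1)

/-- The density `f d t = (1/π)·√(A_d(t)·M_d(t) − B_d(t)²) / M_d(t)`. -/
noncomputable def f (d : ℕ) (t : ℝ) : ℝ :=
  (1 / Real.pi) * Real.sqrt (A d t * M d t - (B d t) ^ 2) / M d t

/-- The coefficients `a_k`. -/
noncomputable def a (d k : ℕ) : ℝ :=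
  (∑ i ∈ Finset.range d, ∑ j ∈ Finset.range (d - 1),
      if i + j = k then ((d - 1).choose i : ℝ) ^ 2 * ((d - 2).choose j : ℝ) ^ 2 else 0)
  - (∑ i ∈ Finset.range (d - 1), ∑ j ∈ Finset.range (d - 1),
      if i + j + 1 = k then
        ((d - 2).choose i : ℝ) * ((d - 1).choose (i + 1) : ℝ) *
          ((d - 2).choose j : ℝ) * ((d - 1).choose (j + 1) : ℝ)
      else 0)


noncomputable def cR (n k : ℕ) : ℝ := ((n.choose k : ℕ) : ℝ) ^ 2

lemma cR_nonneg (n k : ℕ) : 0 ≤ cR n k := by unfold cR; positivity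

noncomputable def hh (n m i : ℕ) : ℝ := cR n i * cR n (m - i)

lemma hh_nonneg (n m i : ℕ) : 0 ≤ hh n m i :=
  mul_nonneg (cR_nonneg _ _) (cR_nonneg _ _)

/-- geometric sum bounds -/
lemma geo0 {q : ℝ} (h0 : 0 ≤ q) (h1 : q < 1) (N : ℕ) :
    ∑ j ∈ range N, q ^ j ≤ 1 / (1 - q) := by
  have hq : q ≠ 1 := ne_of_lt h1
  have h2 : 0 < 1 - q := by linarith
  rw [geom_sum_eq hq]
  have e : (q ^ N - 1) / (q - 1) = (1 - q ^ N) / (1 - q) := by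
    rw [div_eq_div_iff (by linarith) (by linarith)]; ring
  rw [e]
  have hqN : 0 ≤ q ^ N := by positivity
  gcongr
  linarith

lemma geo1 {q : ℝ} (h0 : 0 ≤ q) (h1 : q < 1) (N : ℕ) :
    ∑ j ∈ range N, ((j : ℝ) + 1) * q ^ j ≤ 1 / (1 - q) ^ 2 := by
  have h2 : 0 < 1 - q := by linarith
  set S := ∑ j ∈ range N, ((j : ℝ) + 1) * q ^ j with hS
  have hshift : ∑ j ∈ range N, ((j : ℝ) + 1) * q ^ (j + 1)
      = ∑ j ∈ range N, (j : ℝ) * q ^ j + (N : ℝ) * q ^ N := by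
    have e1 := Finset.sum_range_succ (fun j => (j : ℝ) * q ^ j) N
    have e2 := Finset.sum_range_succ' (fun j => (j : ℝ) * q ^ j) N
    simp only [Nat.cast_add, Nat.cast_one, Nat.cast_zero, zero_mul, add_zero, pow_zero] at e1 e2
    rw [e2] at e1
    linarith [e1]
  have hqS : q * S = ∑ j ∈ range N, ((j : ℝ) + 1) * q ^ (j + 1) := by
    rw [hS, Finset.mul_sum]; apply sum_congr rfl; intro j _; ring
  have e3 : S - ∑ j ∈ range N, (j : ℝ) * q ^ j = ∑ j ∈ range N, q ^ j := by
    rw [hS, ← Finset.sum_sub_distrib]; apply sum_congr rfl; intro j _; ring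
  have key : (1 - q) * S = ∑ j ∈ range N, q ^ j - (N : ℝ) * q ^ N := by
    have : (1 - q) * S = S - q * S := by ring
    rw [this, hqS, hshift]; linarith
  have hb : (1 - q) * S ≤ 1 / (1 - q) := by
    rw [key]
    have := geo0 h0 h1 N
    have hN : 0 ≤ (N : ℝ) * q ^ N := by positivity
    linarith
  calc S = ((1 - q) * S) / (1 - q) := by field_simp
  _ ≤ (1 / (1 - q)) / (1 - q) := by gcongr
  _ = 1 / (1 - q) ^ 2 := by field_simp

lemma geo2 {q : ℝ} (h0 : 0 ≤ q) (h1 : q < 1) (N : ℕ) :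
    ∑ j ∈ range N, (j : ℝ) ^ 2 * q ^ j ≤ 2 / (1 - q) ^ 3 := by
  have h2 : 0 < 1 - q := by linarith
  set S := ∑ j ∈ range N, ((j : ℝ) + 1) * ((j : ℝ) + 2) * q ^ j with hS
  have hshift : ∑ j ∈ range N, ((j : ℝ) + 1) * ((j : ℝ) + 2) * q ^ (j + 1)
      = ∑ j ∈ range N, (j : ℝ) * ((j : ℝ) + 1) * q ^ j + (N : ℝ) * ((N : ℝ) + 1) * q ^ N := by
    have e1 := Finset.sum_range_succ (fun j => (j : ℝ) * ((j : ℝ) + 1) * q ^ j) N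
    have e2 := Finset.sum_range_succ' (fun j => (j : ℝ) * ((j : ℝ) + 1) * q ^ j) N
    simp only [Nat.cast_add, Nat.cast_one, Nat.cast_zero, zero_mul, add_zero, pow_zero] at e1 e2
    rw [e2] at e1
    have : ∀ j : ℕ, ((j : ℝ) + 1) * (((j : ℝ) + 1) + 1) * q ^ (j + 1)
        = ((j : ℝ) + 1) * ((j : ℝ) + 2) * q ^ (j + 1) := by intro j; ring
    simp only [this] at e1
    linarith [e1]
  have hqS : q * S = ∑ j ∈ range N, ((j : ℝ) + 1) * ((j : ℝ) + 2) * q ^ (j + 1) := by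
    rw [hS, Finset.mul_sum]; apply sum_congr rfl; intro j _; ring
  have e3 : S - ∑ j ∈ range N, (j : ℝ) * ((j : ℝ) + 1) * q ^ j
      = ∑ j ∈ range N, 2 * (((j : ℝ) + 1) * q ^ j) := by
    rw [hS, ← Finset.sum_sub_distrib]; apply sum_congr rfl; intro j _; ring
  have key : (1 - q) * S
      = 2 * ∑ j ∈ range N, ((j : ℝ) + 1) * q ^ j - (N : ℝ) * ((N : ℝ) + 1) * q ^ N := by
    have h4 : (1 - q) * S = S - q * S := by ring
    rw [h4, hqS, hshift]
    rw [← Finset.mul_sum] at e3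
    linarith
  have hb : (1 - q) * S ≤ 2 / (1 - q) ^ 2 := by
    rw [key]
    have := geo1 h0 h1 N
    have hN : 0 ≤ (N : ℝ) * ((N : ℝ) + 1) * q ^ N := by positivity
    have h5 : 2 * (1 / (1 - q) ^ 2) = 2 / (1 - q) ^ 2 := by ring
    linarith
  have hfin : S ≤ 2 / (1 - q) ^ 3 := by
    calc S = ((1 - q) * S) / (1 - q) := by field_simp
    _ ≤ (2 / (1 - q) ^ 2) / (1 - q) := by gcongr
    _ = 2 / (1 - q) ^ 3 := by field_simp
  refine le_trans (Finset.sum_le_sum ?_) hfin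
  intro j _
  have : 0 ≤ q ^ j := by positivity
  nlinarith [Nat.cast_nonneg (α := ℝ) j]

set_option maxHeartbeats 1000000 in
lemma hstep (n m D i : ℕ) (hn : 1 ≤ n) (hD : D ≤ n) (hi1 : 1 ≤ i)
    (hi2 : i + D ≤ m / 2) (hm : m ≤ 2 * n) :
    hh n m (i - 1) ≤ (1 - (D : ℝ) / n) ^ 2 * hh n m i := by
  set j := m - i with hj
  have hij : i ≤ j := by omega
  have hjm : i + j = m := by omega
  have hin : i + D ≤ n := by omega
  have hmi1 : m - (i - 1) = j + 1 := by omega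
  have hi1n : i - 1 ≤ n - 1 := by omega
  -- nat multiplicative identities
  have e1 : n.choose i * i = n.choose (i - 1) * (n - (i - 1)) := by
    have h := Nat.choose_succ_right_eq n (i - 1)
    rw [show i - 1 + 1 = i from by omega] at h
    exact h
  have e2 : n.choose (j + 1) * (j + 1) = n.choose j * (n - j) := Nat.choose_succ_right_eq n j
  have E1 : (n.choose i : ℝ) * i = (n.choose (i - 1) : ℝ) * ((n - (i - 1) : ℕ) : ℝ) := by
    exact_mod_cast congrArg (fun x : ℕ => (x : ℝ)) e1
  have E2 : (n.choose (j + 1) : ℝ) * ((j : ℝ) + 1) = (n.choose j : ℝ) * ((n - j : ℕ) : ℝ) := by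
    have := congrArg (fun x : ℕ => (x : ℝ)) e2
    push_cast at this
    linarith
  set P : ℝ := ((n - (i - 1) : ℕ) : ℝ) * ((j : ℝ) + 1) with hP
  set qv : ℝ := (i : ℝ) * ((n - j : ℕ) : ℝ) with hqv
  have key : hh n m (i - 1) * P ^ 2 = hh n m i * qv ^ 2 := by
    unfold hh cR
    rw [hmi1, ← hj]
    calc ((n.choose (i-1) : ℝ))^2 * ((n.choose (j+1) : ℝ))^2 * P^2
        = ((n.choose (i-1) : ℝ) * ((n - (i - 1) : ℕ) : ℝ))^2
          * ((n.choose (j+1) : ℝ) * ((j : ℝ) + 1))^2 := by rw [hP]; ring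
      _ = ((n.choose i : ℝ) * i)^2 * ((n.choose j : ℝ) * ((n - j : ℕ) : ℝ))^2 := by
          rw [← E1, ← E2]
      _ = ((n.choose i : ℝ))^2 * ((n.choose j : ℝ))^2 * qv^2 := by rw [hqv]; ring
  have hn0 : (0 : ℝ) < n := by exact_mod_cast hn
  have hDn : (D : ℝ) / n ≤ 1 := by
    rw [div_le_one hn0]; exact_mod_cast hD
  have hDn0 : 0 ≤ (D : ℝ) / n := by positivity
  have hP0 : 0 < P := by
    rw [hP]
    have : 1 ≤ n - (i - 1) := by omega
    have h1 : (1 : ℝ) ≤ ((n - (i - 1) : ℕ) : ℝ) := by exact_mod_cast this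
    nlinarith [Nat.cast_nonneg (α := ℝ) j]
  have hq0 : 0 ≤ qv := by
    rw [hqv]; positivity
  -- the ratio inequality
  have hqP : qv ≤ (1 - (D : ℝ) / n) * P := by
    have hc1 : ((n - j : ℕ) : ℝ) ≤ ((n - (i - 1) : ℕ) : ℝ) := by
      have : (n - j : ℕ) ≤ (n - (i - 1) : ℕ) := by omega
      exact_mod_cast this
    have hc2 : (i : ℝ) ≤ (1 - (D : ℝ) / n) * ((j : ℝ) + 1) := by
      rw [show (1 - (D : ℝ) / n) = ((n : ℝ) - D) / n from by field_simp]
      rw [← sub_nonneg]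
      have expand : ((n : ℝ) - D) / n * ((j : ℝ) + 1) - i
          = (((n : ℝ) - D) * ((j : ℝ) + 1) - (n : ℝ) * i) / n := by field_simp
      rw [expand]
      apply div_nonneg _ hn0.le
      have hiD : (i : ℝ) + D ≤ n := by exact_mod_cast hin
      have hji : (i : ℝ) + 2 * D + 1 ≤ (j : ℝ) + 1 := by
        have : i + 2 * D ≤ j := by omega
        have := (Nat.cast_le (α := ℝ)).2 this
        push_cast at this
        linarith
      have hD0 : (0 : ℝ) ≤ D := Nat.cast_nonneg D
      have hi0 : (0 : ℝ) ≤ i := Nat.cast_nonneg i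
      nlinarith
    calc qv = (i : ℝ) * ((n - j : ℕ) : ℝ) := hqv
      _ ≤ ((1 - (D : ℝ) / n) * ((j : ℝ) + 1)) * ((n - (i - 1) : ℕ) : ℝ) := by
          apply mul_le_mul hc2 hc1 (Nat.cast_nonneg _)
          have h1 : (0:ℝ) ≤ 1 - (D : ℝ) / n := by linarith
          have h2 : (0:ℝ) ≤ (j : ℝ) + 1 := by positivity
          exact mul_nonneg h1 h2
      _ = (1 - (D : ℝ) / n) * P := by rw [hP]; ring
  have hq2 : qv ^ 2 ≤ ((1 - (D : ℝ) / n) * P) ^ 2 := by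
    apply pow_le_pow_left₀ hq0 hqP
  have step : hh n m (i - 1) * P ^ 2 ≤ ((1 - (D : ℝ) / n) ^ 2 * hh n m i) * P ^ 2 := by
    rw [key]
    calc hh n m i * qv ^ 2 ≤ hh n m i * ((1 - (D : ℝ) / n) * P) ^ 2 := by
          apply mul_le_mul_of_nonneg_left hq2 (hh_nonneg _ _ _)
      _ = ((1 - (D : ℝ) / n) ^ 2 * hh n m i) * P ^ 2 := by ring
  exact le_of_mul_le_mul_right step (by positivity)

def sig (m i : ℕ) : ℕ := (m / 2 - i) + (i - (m - m / 2))

lemma hchain (n m D : ℕ) (hn : 1 ≤ n) (hD : D ≤ n) (hm : m ≤ 2 * n) :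
    ∀ s, s ≤ m / 2 →
      hh n m (m / 2 - s) ≤ hh n m (m / 2) * ((1 - (D : ℝ) / n) ^ 2) ^ (s - D) := by
  intro s
  induction s with
  | zero => intro _; simp
  | succ s ih =>
    intro hs
    have hs' : s ≤ m / 2 := by omega
    have ih' := ih hs'
    have hn0 : (0 : ℝ) < n := by exact_mod_cast hn
    have hDn : (D : ℝ) / n ≤ 1 := by
      rw [div_le_one hn0]; exact_mod_cast hD
    have hDn0 : 0 ≤ (D : ℝ) / n := by positivity
    have hr0 : (0 : ℝ) ≤ (1 - (D : ℝ) / n) ^ 2 := sq_nonneg _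
    have hidx : m / 2 - (s + 1) = (m / 2 - s) - 1 := by omega
    by_cases hcase : D ≤ s
    · have step := hstep n m D (m / 2 - s) hn hD (by omega) (by omega) hm
      calc hh n m (m / 2 - (s + 1)) = hh n m ((m / 2 - s) - 1) := by rw [hidx]
        _ ≤ (1 - (D : ℝ) / n) ^ 2 * hh n m (m / 2 - s) := step
        _ ≤ (1 - (D : ℝ) / n) ^ 2
            * (hh n m (m / 2) * ((1 - (D : ℝ) / n) ^ 2) ^ (s - D)) := by
            exact mul_le_mul_of_nonneg_left ih' hr0
        _ = hh n m (m / 2) * ((1 - (D : ℝ) / n) ^ 2) ^ (s + 1 - D) := by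
            rw [show s + 1 - D = (s - D) + 1 from by omega]; ring
    · have step := hstep n m 0 (m / 2 - s) hn (by omega) (by omega) (by omega) hm
      simp only [Nat.cast_zero, zero_div, sub_zero, one_pow, one_mul] at step
      have hexp1 : s - D = 0 := by omega
      have hexp2 : s + 1 - D = 0 := by omega
      rw [hexp2, pow_zero, mul_one]
      rw [hexp1, pow_zero, mul_one] at ih'
      calc hh n m (m / 2 - (s + 1)) = hh n m ((m / 2 - s) - 1) := by rw [hidx]
        _ ≤ hh n m (m / 2 - s) := step
        _ ≤ hh n m (m / 2) := ih'

lemma hall (n m D i : ℕ) (hn : 1 ≤ n) (hD : D ≤ n) (hm : m ≤ 2 * n)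
    (him : i ≤ m) (hin : i ≤ n) :
    hh n m i ≤ hh n m (m / 2) * ((1 - (D : ℝ) / n) ^ 2) ^ (sig m i - D) := by
  by_cases hc : i ≤ m / 2
  · have hsig : sig m i = m / 2 - i := by simp only [sig]; omega
    rw [hsig]
    have h := hchain n m D hn hD hm (m / 2 - i) (by omega)
    rwa [show m / 2 - (m / 2 - i) = i from by omega] at h
  · have hsym : hh n m i = hh n m (m - i) := by
      unfold hh
      rw [show m - (m - i) = i from by omega]
      ring
    have hsig : sig m i = m / 2 - (m - i) := by simp only [sig]; omega
    rw [hsym, hsig]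
    have h := hchain n m D hn hD hm (m / 2 - (m - i)) (by omega)
    rwa [show m / 2 - (m / 2 - (m - i)) = m - i from by omega] at h

noncomputable def VV (n : ℕ) : ℝ :=
  (2 * (n.sqrt : ℝ) + 1) ^ 2 + 4 * (2 * (n.sqrt : ℝ) + 3) ^ 2 * ((n : ℝ) / (n.sqrt : ℝ))
    + 32 * ((n : ℝ) / (n.sqrt : ℝ)) ^ 3

lemma sqrt_facts (n : ℕ) (hn : 16 ≤ n) :
    4 ≤ n.sqrt ∧ n.sqrt ≤ n := by
  constructor
  · have h := Nat.sqrt_le_sqrt hn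
    exact Nat.le_sqrt.2 (by omega)
  · exact Nat.sqrt_le_self n

set_option maxHeartbeats 1000000 in
lemma perm (n m : ℕ) (hn : 16 ≤ n) (hm : m ≤ 2 * n) :
    ∑ i ∈ Finset.Icc (m - n) (min m n), ((i : ℝ) - ((m - i : ℕ) : ℝ)) ^ 2 * hh n m i
      ≤ VV n * ∑ i ∈ Finset.Icc (m - n) (min m n), hh n m i := by
  obtain ⟨hD4, hDn⟩ := sqrt_facts n hn
  set D := n.sqrt with hDdef
  have hn1 : 1 ≤ n := by omega
  have hn0 : (0 : ℝ) < n := by exact_mod_cast hn1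
  have hD0 : (0 : ℝ) < D := by exact_mod_cast (by omega : 0 < D)
  have hDn' : (D : ℝ) / n ≤ 1 := by rw [div_le_one hn0]; exact_mod_cast hDn
  have hDnpos : (0 : ℝ) < (D : ℝ) / n := div_pos hD0 hn0
  set r := (1 - (D : ℝ) / n) ^ 2 with hrdef
  have hr0 : (0 : ℝ) ≤ r := sq_nonneg _
  have hrlt : (D : ℝ) / n ≤ 1 - r := by rw [hrdef]; nlinarith
  have h1r : (0 : ℝ) < 1 - r := lt_of_lt_of_le hDnpos hrlt
  have hr1 : r < 1 := by linarith
  have hinv : 1 / (1 - r) ≤ (n : ℝ) / D := by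
    rw [div_le_div_iff₀ h1r hD0]
    have hmul := mul_le_mul_of_nonneg_left hrlt hn0.le
    have hid : (n : ℝ) * ((D : ℝ) / n) = D := by field_simp
    linarith
  set J := Finset.Icc (m - n) (min m n) with hJ
  set h₀ := hh n m (m / 2) with hh₀
  have h₀0 : 0 ≤ h₀ := hh_nonneg _ _ _
  have hmemJ : m / 2 ∈ J := by simp only [hJ, Finset.mem_Icc]; omega
  have h₀le : h₀ ≤ ∑ i ∈ J, hh n m i :=
    Finset.single_le_sum (fun i _ => hh_nonneg n m i) hmemJ
  have hsumJ0 : 0 ≤ ∑ i ∈ J, hh n m i := Finset.sum_nonneg fun i _ => hh_nonneg n m i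
  -- weight bound
  have hW : ∀ i ∈ J, ((i : ℝ) - ((m - i : ℕ) : ℝ)) ^ 2 ≤ (((2 * sig m i + 1 : ℕ)) : ℝ) ^ 2 := by
    intro i hi
    simp only [hJ, Finset.mem_Icc] at hi
    have hnat1 : m - i ≤ i + (2 * sig m i + 1) := by simp only [sig]; omega
    have hnat2 : i ≤ (m - i) + (2 * sig m i + 1) := by simp only [sig]; omega
    have c1 : ((m - i : ℕ) : ℝ) ≤ (i : ℝ) + ((2 * sig m i + 1 : ℕ) : ℝ) := by
      exact_mod_cast hnat1
    have c2 : (i : ℝ) ≤ ((m - i : ℕ) : ℝ) + ((2 * sig m i + 1 : ℕ) : ℝ) := by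
      exact_mod_cast hnat2
    apply sq_le_sq' <;> linarith
  have main1 : ∑ i ∈ J, ((i : ℝ) - ((m - i : ℕ) : ℝ)) ^ 2 * hh n m i
      ≤ ∑ i ∈ J, (((2 * sig m i + 1 : ℕ)) : ℝ) ^ 2 * hh n m i := by
    apply Finset.sum_le_sum
    intro i hi
    exact mul_le_mul_of_nonneg_right (hW i hi) (hh_nonneg n m i)
  -- split into near and far
  rw [← Finset.sum_filter_add_sum_filter_not J (fun i => sig m i ≤ D)
    (fun i => (((2 * sig m i + 1 : ℕ)) : ℝ) ^ 2 * hh n m i)] at main1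
  set Fn := J.filter (fun i => sig m i ≤ D) with hFn
  set Ff := J.filter (fun i => ¬ sig m i ≤ D) with hFf
  have hnear : ∑ i ∈ Fn, (((2 * sig m i + 1 : ℕ)) : ℝ) ^ 2 * hh n m i
      ≤ ((2 * (D : ℝ) + 1)) ^ 2 * ∑ i ∈ J, hh n m i := by
    have step1 : ∑ i ∈ Fn, (((2 * sig m i + 1 : ℕ)) : ℝ) ^ 2 * hh n m i
        ≤ ∑ i ∈ Fn, ((2 * (D : ℝ) + 1)) ^ 2 * hh n m i := by
      apply Finset.sum_le_sum
      intro i hi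
      simp only [hFn, Finset.mem_filter] at hi
      have hle : ((2 * sig m i + 1 : ℕ) : ℝ) ≤ 2 * (D : ℝ) + 1 := by
        exact_mod_cast (show (2 * sig m i + 1 : ℕ) ≤ 2 * D + 1 by omega)
      exact mul_le_mul_of_nonneg_right
        (pow_le_pow_left₀ (Nat.cast_nonneg _) hle 2) (hh_nonneg n m i)
    rw [← Finset.mul_sum] at step1
    refine step1.trans ?_
    apply mul_le_mul_of_nonneg_left _ (by positivity)
    apply Finset.sum_le_sum_of_subset_of_nonneg (Finset.filter_subset _ _)
    intro i _ _
    exact hh_nonneg n m i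
  -- far part
  have hfar : ∑ i ∈ Ff, (((2 * sig m i + 1 : ℕ)) : ℝ) ^ 2 * hh n m i
      ≤ (4 * (2 * (D : ℝ) + 3) ^ 2 * ((n : ℝ) / D) + 32 * ((n : ℝ) / D) ^ 3)
        * ∑ i ∈ J, hh n m i := by
    set φ : ℕ → ℝ := fun s => ((2 * s + 1 : ℕ) : ℝ) ^ 2 * (h₀ * r ^ (s - D)) with hφ
    have φ0 : ∀ s, 0 ≤ φ s := by
      intro s; simp only [hφ]; positivity
    have step1 : ∑ i ∈ Ff, (((2 * sig m i + 1 : ℕ)) : ℝ) ^ 2 * hh n m i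
        ≤ ∑ i ∈ Ff, φ (sig m i) := by
      apply Finset.sum_le_sum
      intro i hi
      simp only [hFf, Finset.mem_filter, hJ, Finset.mem_Icc] at hi
      have hhall := hall n m D i hn1 hDn hm (by omega) (by omega)
      simp only [hφ]
      exact mul_le_mul_of_nonneg_left hhall (by positivity)
    have hmaps : ∀ i ∈ Ff, sig m i ∈ Finset.Ico (D + 1) (n + 1) := by
      intro i hi
      simp only [hFf, Finset.mem_filter, hJ, Finset.mem_Icc] at hi
      simp only [Finset.mem_Ico]
      constructor
      · omega
      · have : sig m i ≤ n := by simp only [sig]; omega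
        omega
    have step2 : ∑ i ∈ Ff, φ (sig m i)
        ≤ ∑ s ∈ Finset.Ico (D + 1) (n + 1), 2 * φ s := by
      rw [← Finset.sum_fiberwise_of_maps_to hmaps (fun i => φ (sig m i))]
      apply Finset.sum_le_sum
      intro s hs
      have hcongr : ∑ i ∈ Ff.filter (fun i => sig m i = s), φ (sig m i)
          = ∑ i ∈ Ff.filter (fun i => sig m i = s), φ s := by
        apply Finset.sum_congr rfl
        intro i hi
        rw [(Finset.mem_filter.1 hi).2]
      rw [hcongr, Finset.sum_const]
      have hsub : Ff.filter (fun i => sig m i = s) ⊆ {m / 2 - s, (m - m / 2) + s} := by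
        intro i hi
        simp only [hFf, Finset.mem_filter, hJ, Finset.mem_Icc, sig] at hi
        simp only [Finset.mem_insert, Finset.mem_singleton]
        omega
      have hcard : (Ff.filter (fun i => sig m i = s)).card ≤ 2 := by
        refine le_trans (Finset.card_le_card hsub) ?_
        refine le_trans (Finset.card_insert_le _ _) ?_
        simp
      rw [nsmul_eq_mul]
      exact mul_le_mul_of_nonneg_right (by exact_mod_cast hcard) (φ0 s)
    have step3 : ∑ s ∈ Finset.Ico (D + 1) (n + 1), φ s
        ≤ 2 * (2 * (D : ℝ) + 3) ^ 2 * h₀ * ((n : ℝ) / D)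
          + 16 * h₀ * ((n : ℝ) / D) ^ 3 := by
      rw [Finset.sum_Ico_eq_sum_range]
      have hterm : ∀ j ∈ Finset.range (n + 1 - (D + 1)),
          φ (D + 1 + j) ≤ (2 * (2 * (D : ℝ) + 3) ^ 2 + 8 * (j : ℝ) ^ 2) * (h₀ * r ^ j) := by
        intro j _
        simp only [hφ]
        have hexp : D + 1 + j - D = j + 1 := by omega
        rw [hexp]
        have hc : ((2 * (D + 1 + j) + 1 : ℕ) : ℝ) = 2 * (D : ℝ) + 3 + 2 * (j : ℝ) := by
          push_cast; ring
        rw [hc]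
        have hsq : (2 * (D : ℝ) + 3 + 2 * (j : ℝ)) ^ 2
            ≤ 2 * (2 * (D : ℝ) + 3) ^ 2 + 8 * (j : ℝ) ^ 2 := by
          nlinarith [sq_nonneg ((2 * (D : ℝ) + 3) - 2 * (j : ℝ))]
        have hrpow : r ^ (j + 1) ≤ r ^ j := pow_le_pow_of_le_one hr0 hr1.le (by omega)
        calc (2 * (D : ℝ) + 3 + 2 * (j : ℝ)) ^ 2 * (h₀ * r ^ (j + 1))
            ≤ (2 * (D : ℝ) + 3 + 2 * (j : ℝ)) ^ 2 * (h₀ * r ^ j) := by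
              apply mul_le_mul_of_nonneg_left _ (by positivity)
              exact mul_le_mul_of_nonneg_left hrpow h₀0
          _ ≤ (2 * (2 * (D : ℝ) + 3) ^ 2 + 8 * (j : ℝ) ^ 2) * (h₀ * r ^ j) := by
              apply mul_le_mul_of_nonneg_right hsq (by positivity)
      refine le_trans (Finset.sum_le_sum hterm) ?_
      have hsplit : ∑ j ∈ Finset.range (n + 1 - (D + 1)),
          (2 * (2 * (D : ℝ) + 3) ^ 2 + 8 * (j : ℝ) ^ 2) * (h₀ * r ^ j)
          = 2 * (2 * (D : ℝ) + 3) ^ 2 * h₀ * (∑ j ∈ Finset.range (n + 1 - (D + 1)), r ^ j)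
            + 8 * h₀ * (∑ j ∈ Finset.range (n + 1 - (D + 1)), (j : ℝ) ^ 2 * r ^ j) := by
        rw [Finset.mul_sum, Finset.mul_sum, ← Finset.sum_add_distrib]
        apply Finset.sum_congr rfl
        intro j _
        ring
      rw [hsplit]
      have g0 := geo0 hr0 hr1 (n + 1 - (D + 1))
      have g2 := geo2 hr0 hr1 (n + 1 - (D + 1))
      have hc1 : (0 : ℝ) ≤ 2 * (2 * (D : ℝ) + 3) ^ 2 * h₀ := by positivity
      have hc2 : (0 : ℝ) ≤ 8 * h₀ := by positivity
      have hcube : 1 / (1 - r) ^ 3 ≤ ((n : ℝ) / D) ^ 3 := by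
        have h1 : (1 : ℝ) / (1 - r) ^ 3 = (1 / (1 - r)) ^ 3 := by
          field_simp
        rw [h1]
        apply pow_le_pow_left₀ (by positivity) hinv
      calc 2 * (2 * (D : ℝ) + 3) ^ 2 * h₀ * (∑ j ∈ Finset.range (n + 1 - (D + 1)), r ^ j)
            + 8 * h₀ * (∑ j ∈ Finset.range (n + 1 - (D + 1)), (j : ℝ) ^ 2 * r ^ j)
          ≤ 2 * (2 * (D : ℝ) + 3) ^ 2 * h₀ * (1 / (1 - r))
            + 8 * h₀ * (2 / (1 - r) ^ 3) := by
            apply add_le_add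
            · exact mul_le_mul_of_nonneg_left g0 hc1
            · exact mul_le_mul_of_nonneg_left g2 hc2
        _ ≤ 2 * (2 * (D : ℝ) + 3) ^ 2 * h₀ * ((n : ℝ) / D)
            + 8 * h₀ * (2 * ((n : ℝ) / D) ^ 3) := by
            apply add_le_add
            · exact mul_le_mul_of_nonneg_left hinv hc1
            · apply mul_le_mul_of_nonneg_left _ hc2
              have : (2 : ℝ) / (1 - r) ^ 3 = 2 * (1 / (1 - r) ^ 3) := by ring
              rw [this]
              linarith [hcube]
        _ = 2 * (2 * (D : ℝ) + 3) ^ 2 * h₀ * ((n : ℝ) / D) + 16 * h₀ * ((n : ℝ) / D) ^ 3 := by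
            ring
    calc ∑ i ∈ Ff, (((2 * sig m i + 1 : ℕ)) : ℝ) ^ 2 * hh n m i
        ≤ ∑ i ∈ Ff, φ (sig m i) := step1
      _ ≤ ∑ s ∈ Finset.Ico (D + 1) (n + 1), 2 * φ s := step2
      _ = 2 * ∑ s ∈ Finset.Ico (D + 1) (n + 1), φ s := by rw [Finset.mul_sum]
      _ ≤ 2 * (2 * (2 * (D : ℝ) + 3) ^ 2 * h₀ * ((n : ℝ) / D) + 16 * h₀ * ((n : ℝ) / D) ^ 3) := by
          apply mul_le_mul_of_nonneg_left step3 (by norm_num)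
      _ = (4 * (2 * (D : ℝ) + 3) ^ 2 * ((n : ℝ) / D) + 32 * ((n : ℝ) / D) ^ 3) * h₀ := by ring
      _ ≤ (4 * (2 * (D : ℝ) + 3) ^ 2 * ((n : ℝ) / D) + 32 * ((n : ℝ) / D) ^ 3)
            * ∑ i ∈ J, hh n m i := by
          apply mul_le_mul_of_nonneg_left h₀le (by positivity)
  refine main1.trans ?_
  have hfinal : ((2 * (D : ℝ) + 1)) ^ 2 * ∑ i ∈ J, hh n m i
      + (4 * (2 * (D : ℝ) + 3) ^ 2 * ((n : ℝ) / D) + 32 * ((n : ℝ) / D) ^ 3)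
        * ∑ i ∈ J, hh n m i
      = VV n * ∑ i ∈ J, hh n m i := by
    rw [VV, ← hDdef]
    ring
  linarith [hnear, hfar]

noncomputable def G0 (n : ℕ) (t : ℝ) : ℝ := ∑ k ∈ range (n + 1), cR n k * t ^ (2 * k)
noncomputable def G1 (n : ℕ) (t : ℝ) : ℝ := ∑ k ∈ range (n + 1), (k : ℝ) * cR n k * t ^ (2 * k)
noncomputable def G2 (n : ℕ) (t : ℝ) : ℝ :=
  ∑ k ∈ range (n + 1), (k : ℝ) ^ 2 * cR n k * t ^ (2 * k)
noncomputable def QQ (n : ℕ) (t : ℝ) : ℝ := G2 n t * G0 n t - (G1 n t) ^ 2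

lemma evenpow_nonneg (t : ℝ) (k : ℕ) : 0 ≤ t ^ (2 * k) := by
  rw [pow_mul]; positivity

lemma twoQ_eq (n : ℕ) (t : ℝ) :
    2 * QQ n t = ∑ i ∈ range (n + 1), ∑ j ∈ range (n + 1),
      ((i : ℝ) - (j : ℝ)) ^ 2 * (cR n i * cR n j) * t ^ (2 * (i + j)) := by
  have hpow : ∀ i j : ℕ, t ^ (2 * i) * t ^ (2 * j) = t ^ (2 * (i + j)) := by
    intro i j; rw [← pow_add]; congr 1; ring
  have h20 : G2 n t * G0 n t = ∑ i ∈ range (n + 1), ∑ j ∈ range (n + 1),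
      (i : ℝ) ^ 2 * (cR n i * cR n j) * t ^ (2 * (i + j)) := by
    rw [G2, G0, Finset.sum_mul_sum]
    apply Finset.sum_congr rfl; intro i _
    apply Finset.sum_congr rfl; intro j _
    rw [← hpow i j]; ring
  have h02 : G0 n t * G2 n t = ∑ i ∈ range (n + 1), ∑ j ∈ range (n + 1),
      (j : ℝ) ^ 2 * (cR n i * cR n j) * t ^ (2 * (i + j)) := by
    rw [G2, G0, Finset.sum_mul_sum]
    apply Finset.sum_congr rfl; intro i _
    apply Finset.sum_congr rfl; intro j _
    rw [← hpow i j]; ring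
  have h11 : G1 n t * G1 n t = ∑ i ∈ range (n + 1), ∑ j ∈ range (n + 1),
      ((i : ℝ) * (j : ℝ)) * (cR n i * cR n j) * t ^ (2 * (i + j)) := by
    rw [G1, Finset.sum_mul_sum]
    apply Finset.sum_congr rfl; intro i _
    apply Finset.sum_congr rfl; intro j _
    rw [← hpow i j]; ring
  have expand : 2 * QQ n t = G2 n t * G0 n t + G0 n t * G2 n t - 2 * (G1 n t * G1 n t) := by
    rw [QQ]; ring
  rw [expand, h20, h02, h11]
  rw [← Finset.sum_add_distrib]
  rw [Finset.mul_sum, ← Finset.sum_sub_distrib]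
  apply Finset.sum_congr rfl; intro i _
  rw [← Finset.sum_add_distrib]
  rw [Finset.mul_sum, ← Finset.sum_sub_distrib]
  apply Finset.sum_congr rfl; intro j _
  ring

lemma g0sq_eq (n : ℕ) (t : ℝ) :
    (G0 n t) ^ 2 = ∑ i ∈ range (n + 1), ∑ j ∈ range (n + 1),
      (cR n i * cR n j) * t ^ (2 * (i + j)) := by
  have hpow : ∀ i j : ℕ, t ^ (2 * i) * t ^ (2 * j) = t ^ (2 * (i + j)) := by
    intro i j; rw [← pow_add]; congr 1; ring
  rw [sq, G0, Finset.sum_mul_sum]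
  apply Finset.sum_congr rfl; intro i _
  apply Finset.sum_congr rfl; intro j _
  rw [← hpow i j]; ring

lemma QQ_nonneg (n : ℕ) (t : ℝ) : 0 ≤ QQ n t := by
  have h := twoQ_eq n t
  have hpos : 0 ≤ ∑ i ∈ range (n + 1), ∑ j ∈ range (n + 1),
      ((i : ℝ) - (j : ℝ)) ^ 2 * (cR n i * cR n j) * t ^ (2 * (i + j)) := by
    apply Finset.sum_nonneg; intro i _
    apply Finset.sum_nonneg; intro j _
    have := evenpow_nonneg t (i + j)
    have := cR_nonneg n i
    have := cR_nonneg n j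
    positivity
  linarith

set_option maxHeartbeats 1000000 in
lemma Q_le (n : ℕ) (hn : 16 ≤ n) (t : ℝ) : QQ n t ≤ VV n * (G0 n t) ^ 2 := by
  have key : 2 * QQ n t ≤ VV n * (G0 n t) ^ 2 := by
    rw [twoQ_eq, g0sq_eq]
    rw [← Finset.sum_product', ← Finset.sum_product']
    set S := range (n + 1) ×ˢ range (n + 1) with hS
    have hmaps : ∀ p ∈ S, p.1 + p.2 ∈ range (2 * n + 1) := by
      intro p hp
      simp only [hS, Finset.mem_product, Finset.mem_range] at hp
      simp only [Finset.mem_range]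
      omega
    rw [← Finset.sum_fiberwise_of_maps_to hmaps
      (fun p => ((p.1 : ℝ) - (p.2 : ℝ)) ^ 2 * (cR n p.1 * cR n p.2) * t ^ (2 * (p.1 + p.2)))]
    rw [← Finset.sum_fiberwise_of_maps_to hmaps
      (fun p => (cR n p.1 * cR n p.2) * t ^ (2 * (p.1 + p.2)))]
    rw [Finset.mul_sum]
    apply Finset.sum_le_sum
    intro m hm
    simp only [Finset.mem_range] at hm
    -- rewrite fiber sums using the exponent t^(2m)
    have e1 : ∑ p ∈ S.filter (fun p => p.1 + p.2 = m),
        ((p.1 : ℝ) - (p.2 : ℝ)) ^ 2 * (cR n p.1 * cR n p.2) * t ^ (2 * (p.1 + p.2))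
        = (∑ p ∈ S.filter (fun p => p.1 + p.2 = m),
            ((p.1 : ℝ) - (p.2 : ℝ)) ^ 2 * (cR n p.1 * cR n p.2)) * t ^ (2 * m) := by
      rw [Finset.sum_mul]
      apply Finset.sum_congr rfl
      intro p hp
      have := (Finset.mem_filter.1 hp).2
      rw [this]
    have e2 : ∑ p ∈ S.filter (fun p => p.1 + p.2 = m),
        (cR n p.1 * cR n p.2) * t ^ (2 * (p.1 + p.2))
        = (∑ p ∈ S.filter (fun p => p.1 + p.2 = m),
            (cR n p.1 * cR n p.2)) * t ^ (2 * m) := by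
      rw [Finset.sum_mul]
      apply Finset.sum_congr rfl
      intro p hp
      have := (Finset.mem_filter.1 hp).2
      rw [this]
    rw [e1, e2]
    -- transfer to one-dimensional sums over J
    have hbij1 : ∑ p ∈ S.filter (fun p => p.1 + p.2 = m),
        ((p.1 : ℝ) - (p.2 : ℝ)) ^ 2 * (cR n p.1 * cR n p.2)
        = ∑ i ∈ Finset.Icc (m - n) (min m n), ((i : ℝ) - ((m - i : ℕ) : ℝ)) ^ 2 * hh n m i := by
      apply Finset.sum_nbij' (fun p => p.1) (fun i => (i, m - i))
      · intro p hp
        simp only [hS, Finset.mem_filter, Finset.mem_product, Finset.mem_range] at hp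
        simp only [Finset.mem_Icc]
        omega
      · intro i hi
        simp only [Finset.mem_Icc] at hi
        simp only [hS, Finset.mem_filter, Finset.mem_product, Finset.mem_range]
        omega
      · intro p hp
        simp only [hS, Finset.mem_filter, Finset.mem_product, Finset.mem_range] at hp
        have : p.2 = m - p.1 := by omega
        exact Prod.ext rfl this.symm
      · intro i _; rfl
      · intro p hp
        simp only [hS, Finset.mem_filter, Finset.mem_product, Finset.mem_range] at hp
        have h2 : p.2 = m - p.1 := by omega
        rw [hh, h2]
    have hbij2 : ∑ p ∈ S.filter (fun p => p.1 + p.2 = m), (cR n p.1 * cR n p.2)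
        = ∑ i ∈ Finset.Icc (m - n) (min m n), hh n m i := by
      apply Finset.sum_nbij' (fun p => p.1) (fun i => (i, m - i))
      · intro p hp
        simp only [hS, Finset.mem_filter, Finset.mem_product, Finset.mem_range] at hp
        simp only [Finset.mem_Icc]
        omega
      · intro i hi
        simp only [Finset.mem_Icc] at hi
        simp only [hS, Finset.mem_filter, Finset.mem_product, Finset.mem_range]
        omega
      · intro p hp
        simp only [hS, Finset.mem_filter, Finset.mem_product, Finset.mem_range] at hp
        have : p.2 = m - p.1 := by omega
        exact Prod.ext rfl this.symm
      · intro i _; rfl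
      · intro p hp
        simp only [hS, Finset.mem_filter, Finset.mem_product, Finset.mem_range] at hp
        have h2 : p.2 = m - p.1 := by omega
        rw [hh, h2]
    rw [hbij1, hbij2]
    have hperm := perm n m hn (by omega)
    have hp0 := evenpow_nonneg t m
    calc (∑ i ∈ Finset.Icc (m - n) (min m n), ((i : ℝ) - ((m - i : ℕ) : ℝ)) ^ 2 * hh n m i)
          * t ^ (2 * m)
        ≤ (VV n * ∑ i ∈ Finset.Icc (m - n) (min m n), hh n m i) * t ^ (2 * m) := by
          exact mul_le_mul_of_nonneg_right hperm hp0
      _ = VV n * ((∑ i ∈ Finset.Icc (m - n) (min m n), hh n m i) * t ^ (2 * m)) := by ring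
  have h0 := QQ_nonneg n t
  linarith

lemma G0_ge_one (n : ℕ) (t : ℝ) : 1 ≤ G0 n t := by
  have h0 : cR n 0 * t ^ (2 * 0) = 1 := by simp [cR]
  calc (1 : ℝ) = cR n 0 * t ^ (2 * 0) := h0.symm
    _ ≤ ∑ k ∈ range (n + 1), cR n k * t ^ (2 * k) := by
        apply Finset.single_le_sum (f := fun k => cR n k * t ^ (2 * k))
        · intro k _
          exact mul_nonneg (cR_nonneg n k) (evenpow_nonneg t k)
        · simp
    _ = G0 n t := rfl

lemma G0_pos (n : ℕ) (t : ℝ) : 0 < G0 n t := lt_of_lt_of_le one_pos (G0_ge_one n t)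

lemma G0_ge_pow (n : ℕ) (t : ℝ) : t ^ (2 * n) ≤ G0 n t := by
  have h0 : cR n n * t ^ (2 * n) = t ^ (2 * n) := by simp [cR]
  calc t ^ (2 * n) = cR n n * t ^ (2 * n) := h0.symm
    _ ≤ ∑ k ∈ range (n + 1), cR n k * t ^ (2 * k) := by
        apply Finset.single_le_sum (f := fun k => cR n k * t ^ (2 * k))
        · intro k _
          exact mul_nonneg (cR_nonneg n k) (evenpow_nonneg t k)
        · simp
    _ = G0 n t := rfl

lemma M_eq (d : ℕ) (hd : 1 ≤ d) (t : ℝ) : M d t = G0 (d - 1) t := by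
  unfold M G0 cR
  rw [show d - 1 + 1 = d from by omega]

lemma range_split (n : ℕ) : range (n + 1) = insert 0 (Finset.Icc 1 n) := by
  ext x
  simp only [Finset.mem_range, Finset.mem_insert, Finset.mem_Icc]
  omega

lemma A_eq (d : ℕ) (hd : 1 ≤ d) (t : ℝ) (ht : t ≠ 0) : A d t = G2 (d - 1) t / t ^ 2 := by
  set n := d - 1 with hn
  rw [eq_div_iff (pow_ne_zero 2 ht)]
  unfold A G2 cR
  rw [range_split n, Finset.sum_insert (by simp), Finset.sum_mul]
  simp only [Nat.cast_zero, ne_eq, OfNat.ofNat_ne_zero, not_false_eq_true, zero_pow, zero_mul]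
  rw [zero_add, ← hn]
  apply Finset.sum_congr rfl
  intro k hk
  simp only [Finset.mem_Icc] at hk
  rw [mul_assoc, ← pow_add]
  rw [show 2 * (k - 1) + 2 = 2 * k from by omega]

lemma B_eq (d : ℕ) (hd : 1 ≤ d) (t : ℝ) (ht : t ≠ 0) : B d t = G1 (d - 1) t / t := by
  set n := d - 1 with hn
  rw [eq_div_iff ht]
  unfold B G1 cR
  rw [range_split n, Finset.sum_insert (by simp), Finset.sum_mul]
  simp only [Nat.cast_zero, zero_mul]
  rw [zero_add, ← hn]
  apply Finset.sum_congr rfl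
  intro k hk
  simp only [Finset.mem_Icc] at hk
  rw [mul_assoc, ← pow_succ]
  rw [show 2 * k - 1 + 1 = 2 * k from by omega]

lemma f_eq (d : ℕ) (hd : 1 ≤ d) (t : ℝ) (ht : 0 < t) :
    f d t = Real.sqrt (QQ (d - 1) t) / (Real.pi * t * G0 (d - 1) t) := by
  set n := d - 1 with hn
  have ht' : t ≠ 0 := ne_of_gt ht
  unfold f
  rw [M_eq d hd, A_eq d hd t ht', B_eq d hd t ht', ← hn]
  have harg : G2 n t / t ^ 2 * G0 n t - (G1 n t / t) ^ 2 = QQ n t / t ^ 2 := by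
    rw [QQ]; field_simp
  rw [harg, Real.sqrt_div (QQ_nonneg n t), Real.sqrt_sq ht.le]
  have hπ : Real.pi ≠ 0 := ne_of_gt Real.pi_pos
  have hG : G0 n t ≠ 0 := ne_of_gt (G0_pos n t)
  field_simp

lemma f_nonneg (d : ℕ) (hd : 1 ≤ d) (t : ℝ) : 0 ≤ f d t := by
  unfold f
  apply div_nonneg _ (le_trans one_pos.le (by rw [M_eq d hd]; exact G0_ge_one _ t))
  have := Real.sqrt_nonneg (A d t * M d t - B d t ^ 2)
  have := Real.pi_pos
  positivity

lemma M_cont (d : ℕ) : Continuous (fun t => M d t) := by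
  unfold M
  apply continuous_finset_sum
  intro k _
  exact continuous_const.mul (continuous_pow (2 * k))

lemma A_cont (d : ℕ) : Continuous (fun t => A d t) := by
  unfold A
  apply continuous_finset_sum
  intro k _
  exact continuous_const.mul (continuous_pow (2 * (k - 1)))

lemma B_cont (d : ℕ) : Continuous (fun t => B d t) := by
  unfold B
  apply continuous_finset_sum
  intro k _
  exact continuous_const.mul (continuous_pow (2 * k - 1))

lemma f_cont (d : ℕ) (hd : 1 ≤ d) : Continuous (fun t => f d t) := by
  unfold f
  apply Continuous.div
  · exact continuous_const.mul (Real.continuous_sqrt.comp (((A_cont d).mul (M_cont d)).sub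
      ((B_cont d).pow 2)))
  · exact M_cont d
  · intro t
    have : 1 ≤ M d t := by rw [M_eq d hd]; exact G0_ge_one _ t
    linarith

noncomputable def TT (n : ℕ) (t : ℝ) : ℝ :=
  ∑ k ∈ range (n + 1), ((n - k : ℕ) : ℝ) ^ 2 * cR n k * t ^ (2 * k)

lemma Q_le_T (n : ℕ) (t : ℝ) : QQ n t ≤ 2 * TT n t * G0 n t := by
  have h := twoQ_eq n t
  have hpow : ∀ i j : ℕ, t ^ (2 * i) * t ^ (2 * j) = t ^ (2 * (i + j)) := by
    intro i j; rw [← pow_add]; congr 1; ring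
  have hTG : TT n t * G0 n t = ∑ i ∈ range (n + 1), ∑ j ∈ range (n + 1),
      ((n - i : ℕ) : ℝ) ^ 2 * (cR n i * cR n j) * t ^ (2 * (i + j)) := by
    rw [TT, G0, Finset.sum_mul_sum]
    apply Finset.sum_congr rfl; intro i _
    apply Finset.sum_congr rfl; intro j _
    rw [← hpow i j]; ring
  have hGT : G0 n t * TT n t = ∑ i ∈ range (n + 1), ∑ j ∈ range (n + 1),
      ((n - j : ℕ) : ℝ) ^ 2 * (cR n i * cR n j) * t ^ (2 * (i + j)) := by
    rw [TT, G0, Finset.sum_mul_sum]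
    apply Finset.sum_congr rfl; intro i _
    apply Finset.sum_congr rfl; intro j _
    rw [← hpow i j]; ring
  have hbound : 2 * QQ n t ≤ 2 * (TT n t * G0 n t) + 2 * (G0 n t * TT n t) := by
    rw [h, hTG, hGT, Finset.mul_sum, Finset.mul_sum, ← Finset.sum_add_distrib]
    apply Finset.sum_le_sum
    intro i hi
    rw [Finset.mul_sum, Finset.mul_sum, ← Finset.sum_add_distrib]
    apply Finset.sum_le_sum
    intro j hj
    simp only [Finset.mem_range] at hi hj
    have hci : ((n - i : ℕ) : ℝ) = (n : ℝ) - i := by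
      rw [Nat.cast_sub (by omega)]
    have hcj : ((n - j : ℕ) : ℝ) = (n : ℝ) - j := by
      rw [Nat.cast_sub (by omega)]
    have hsq : ((i : ℝ) - (j : ℝ)) ^ 2
        ≤ 2 * ((n - i : ℕ) : ℝ) ^ 2 + 2 * ((n - j : ℕ) : ℝ) ^ 2 := by
      rw [hci, hcj]
      nlinarith [sq_nonneg (((n : ℝ) - i) - ((n : ℝ) - j))]
    have hcc : 0 ≤ cR n i * cR n j := mul_nonneg (cR_nonneg _ _) (cR_nonneg _ _)
    have hp := evenpow_nonneg t (i + j)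
    calc ((i : ℝ) - (j : ℝ)) ^ 2 * (cR n i * cR n j) * t ^ (2 * (i + j))
        ≤ (2 * ((n - i : ℕ) : ℝ) ^ 2 + 2 * ((n - j : ℕ) : ℝ) ^ 2)
            * (cR n i * cR n j) * t ^ (2 * (i + j)) := by
          apply mul_le_mul_of_nonneg_right _ hp
          exact mul_le_mul_of_nonneg_right hsq hcc
      _ = 2 * (((n - i : ℕ) : ℝ) ^ 2 * (cR n i * cR n j) * t ^ (2 * (i + j)))
          + 2 * (((n - j : ℕ) : ℝ) ^ 2 * (cR n i * cR n j) * t ^ (2 * (i + j))) := by ring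
  nlinarith [hbound]

lemma TT_nonneg (n : ℕ) (t : ℝ) : 0 ≤ TT n t := by
  apply Finset.sum_nonneg
  intro k _
  have := evenpow_nonneg t k
  have := cR_nonneg n k
  positivity

set_option maxHeartbeats 1000000 in
lemma f_int (d : ℕ) (hd : 2 ≤ d) : IntegrableOn (fun t => f d t) (Set.Ioi (0 : ℝ)) := by
  have hd1 : 1 ≤ d := by omega
  set n := d - 1 with hn
  have hn1 : 1 ≤ n := by omega
  rw [← Set.Ioc_union_Ioi_eq_Ioi (zero_le_one : (0:ℝ) ≤ 1)]
  apply IntegrableOn.union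
  · exact (f_cont d hd1).integrableOn_Ioc
  · set KC := ∑ k ∈ range (n + 1), ((n - k : ℕ) : ℝ) ^ 2 * cR n k with hKC
    have hKC0 : 0 ≤ KC := by
      apply Finset.sum_nonneg; intro k _
      have := cR_nonneg n k; positivity
    set C2 := Real.sqrt (2 * KC) / Real.pi with hC2
    have hC20 : 0 ≤ C2 := by
      rw [hC2]
      exact div_nonneg (Real.sqrt_nonneg _) Real.pi_pos.le
    have hg : IntegrableOn (fun t : ℝ => C2 * t ^ (-2 : ℝ)) (Set.Ioi 1) := by
      exact (integrableOn_Ioi_rpow_of_lt (by norm_num) one_pos).const_mul C2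
    apply Integrable.mono hg ((f_cont d hd1).aestronglyMeasurable.restrict)
    rw [ae_restrict_iff' measurableSet_Ioi]
    apply Filter.Eventually.of_forall
    intro t ht
    simp only [Set.mem_Ioi] at ht
    have ht0 : (0 : ℝ) < t := lt_trans one_pos ht
    have ht1 : (1 : ℝ) ≤ t := ht.le
    -- bound TT
    have hTb : TT n t ≤ KC * t ^ (2 * n - 2) := by
      rw [hKC, Finset.sum_mul]
      apply Finset.sum_le_sum
      intro k hk
      simp only [Finset.mem_range] at hk
      by_cases hkn : k = n
      · subst hkn
        simp
      · have h2k : 2 * k ≤ 2 * n - 2 := by omega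
        have : t ^ (2 * k) ≤ t ^ (2 * n - 2) := pow_le_pow_right₀ ht1 h2k
        have hc := cR_nonneg n k
        have : ((n - k : ℕ) : ℝ) ^ 2 * cR n k * t ^ (2 * k)
            ≤ ((n - k : ℕ) : ℝ) ^ 2 * cR n k * t ^ (2 * n - 2) := by
          apply mul_le_mul_of_nonneg_left this (by positivity)
        linarith
    -- bound QQ
    have hQb : QQ n t ≤ 2 * KC * t ^ (2 * n - 2) * G0 n t := by
      have h1 := Q_le_T n t
      have h2 : 2 * TT n t * G0 n t ≤ 2 * (KC * t ^ (2 * n - 2)) * G0 n t := by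
        apply mul_le_mul_of_nonneg_right _ (G0_pos n t).le
        linarith [hTb]
      calc QQ n t ≤ 2 * TT n t * G0 n t := h1
        _ ≤ 2 * (KC * t ^ (2 * n - 2)) * G0 n t := h2
        _ = 2 * KC * t ^ (2 * n - 2) * G0 n t := by ring
    -- main estimate
    have hfle : f d t ≤ C2 / t ^ 2 := by
      rw [f_eq d hd1 t ht0, ← hn]
      have hG0 := G0_pos n t
      have hsG0 : 0 < Real.sqrt (G0 n t) := Real.sqrt_pos.2 hG0
      have htn : t ^ n ≤ Real.sqrt (G0 n t) := by
        rw [show Real.sqrt (G0 n t) = Real.sqrt (G0 n t) from rfl]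
        apply (Real.le_sqrt (by positivity) hG0.le).2
        rw [← pow_mul]
        rw [show n * 2 = 2 * n from by ring]
        exact G0_ge_pow n t
      have hQs : Real.sqrt (QQ n t)
          ≤ Real.sqrt (2 * KC) * t ^ (n - 1) * Real.sqrt (G0 n t) := by
        have step := Real.sqrt_le_sqrt hQb
        have heq : Real.sqrt (2 * KC * t ^ (2 * n - 2) * G0 n t)
            = Real.sqrt (2 * KC) * t ^ (n - 1) * Real.sqrt (G0 n t) := by
          rw [Real.sqrt_mul (by positivity), Real.sqrt_mul (by positivity)]
          have : t ^ (2 * n - 2) = (t ^ (n - 1)) ^ 2 := by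
            rw [← pow_mul]; congr 1; omega
          rw [this, Real.sqrt_sq (by positivity)]
        rw [heq] at step
        exact step
      rw [div_le_div_iff₀ (by positivity) (by positivity)]
      calc Real.sqrt (QQ n t) * t ^ 2
          ≤ (Real.sqrt (2 * KC) * t ^ (n - 1) * Real.sqrt (G0 n t)) * t ^ 2 := by
            apply mul_le_mul_of_nonneg_right hQs (by positivity)
        _ = Real.sqrt (2 * KC) * (t ^ (n - 1) * t ^ 2) * Real.sqrt (G0 n t) := by ring
        _ = Real.sqrt (2 * KC) * t ^ (n + 1) * Real.sqrt (G0 n t) := by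
            rw [← pow_add, show n - 1 + 2 = n + 1 from by omega]
        _ = Real.sqrt (2 * KC) * (t * t ^ n) * Real.sqrt (G0 n t) := by
            rw [pow_succ]
            ring
        _ ≤ Real.sqrt (2 * KC) * (t * Real.sqrt (G0 n t)) * Real.sqrt (G0 n t) := by
            apply mul_le_mul_of_nonneg_right _ (Real.sqrt_nonneg _)
            apply mul_le_mul_of_nonneg_left _ (Real.sqrt_nonneg _)
            exact mul_le_mul_of_nonneg_left htn ht0.le
        _ = Real.sqrt (2 * KC) * t * (Real.sqrt (G0 n t) * Real.sqrt (G0 n t)) := by ring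
        _ = Real.sqrt (2 * KC) * t * G0 n t := by rw [Real.mul_self_sqrt hG0.le]
        _ = C2 * (Real.pi * t * G0 n t) := by
            rw [hC2]
            field_simp
    have hrpow : t ^ (-2 : ℝ) = (t ^ 2)⁻¹ := by
      rw [show (-2 : ℝ) = -((2 : ℕ) : ℝ) from by norm_num,
        Real.rpow_neg ht0.le, Real.rpow_natCast]
    rw [Real.norm_eq_abs, Real.norm_eq_abs, abs_of_nonneg (f_nonneg d hd1 t)]
    rw [hrpow]
    have : C2 * (t ^ 2)⁻¹ = C2 / t ^ 2 := by ring
    rw [this, abs_of_nonneg (by positivity)]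
    exact hfle

lemma G0_deriv (n : ℕ) (t : ℝ) (ht : t ≠ 0) :
    HasDerivAt (G0 n) (2 * G1 n t / t) t := by
  have hterms : ∀ k ∈ range (n + 1),
      HasDerivAt (fun t : ℝ => cR n k * t ^ (2 * k))
        (cR n k * ((2 * k : ℕ) * t ^ (2 * k - 1))) t := by
    intro k _
    exact (hasDerivAt_pow (2 * k) t).const_mul _
  have hsum := HasDerivAt.sum hterms
  have heq : ∑ k ∈ range (n + 1), cR n k * ((2 * k : ℕ) * t ^ (2 * k - 1))
      = 2 * G1 n t / t := by
    rw [G1, Finset.mul_sum, Finset.sum_div]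
    apply Finset.sum_congr rfl
    intro k _
    rcases Nat.eq_zero_or_pos k with hk | hk
    · subst hk; simp
    · rw [eq_div_iff ht]
      have hpow : t ^ (2 * k) = t ^ (2 * k - 1) * t := by
        rw [← pow_succ, show 2 * k - 1 + 1 = 2 * k from by omega]
      push_cast
      rw [hpow]
      ring
  rw [← heq]
  have hfun : G0 n = ∑ i ∈ range (n + 1), fun t : ℝ => cR n i * t ^ (2 * i) := by
    ext x; rw [Finset.sum_apply]; rfl
  rw [hfun]; exact hsum

lemma G1_deriv (n : ℕ) (t : ℝ) (ht : t ≠ 0) :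
    HasDerivAt (G1 n) (2 * G2 n t / t) t := by
  have hterms : ∀ k ∈ range (n + 1),
      HasDerivAt (fun t : ℝ => (k : ℝ) * cR n k * t ^ (2 * k))
        ((k : ℝ) * cR n k * ((2 * k : ℕ) * t ^ (2 * k - 1))) t := by
    intro k _
    exact (hasDerivAt_pow (2 * k) t).const_mul _
  have hsum := HasDerivAt.sum hterms
  have heq : ∑ k ∈ range (n + 1), (k : ℝ) * cR n k * ((2 * k : ℕ) * t ^ (2 * k - 1))
      = 2 * G2 n t / t := by
    rw [G2, Finset.mul_sum, Finset.sum_div]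
    apply Finset.sum_congr rfl
    intro k _
    rcases Nat.eq_zero_or_pos k with hk | hk
    · subst hk; simp
    · rw [eq_div_iff ht]
      have hpow : t ^ (2 * k) = t ^ (2 * k - 1) * t := by
        rw [← pow_succ, show 2 * k - 1 + 1 = 2 * k from by omega]
      push_cast
      rw [hpow]
      ring
  rw [← heq]
  have hfun : G1 n = ∑ i ∈ range (n + 1), fun t : ℝ => (i : ℝ) * cR n i * t ^ (2 * i) := by
    ext x; rw [Finset.sum_apply]; rfl
  rw [hfun]; exact hsum

lemma mu_deriv (n : ℕ) (t : ℝ) (ht : 0 < t) :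
    HasDerivAt (fun t => G1 n t / G0 n t) (2 * QQ n t / (t * (G0 n t) ^ 2)) t := by
  have ht' : t ≠ 0 := ne_of_gt ht
  have hG0 : G0 n t ≠ 0 := ne_of_gt (G0_pos n t)
  have h := (G1_deriv n t ht').div (G0_deriv n t ht') hG0
  refine h.congr_deriv ?_
  rw [QQ]
  field_simp

lemma G0_cont (n : ℕ) : Continuous (G0 n) := by
  unfold G0
  apply continuous_finset_sum
  intro k _
  exact continuous_const.mul (continuous_pow (2 * k))

lemma G1_cont (n : ℕ) : Continuous (G1 n) := by
  unfold G1
  apply continuous_finset_sum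
  intro k _
  exact continuous_const.mul (continuous_pow (2 * k))

lemma G2_cont (n : ℕ) : Continuous (G2 n) := by
  unfold G2
  apply continuous_finset_sum
  intro k _
  exact continuous_const.mul (continuous_pow (2 * k))

lemma QQ_cont (n : ℕ) : Continuous (QQ n) := by
  unfold QQ
  exact ((G2_cont n).mul (G0_cont n)).sub ((G1_cont n).pow 2)

lemma G1_nonneg (n : ℕ) (t : ℝ) : 0 ≤ G1 n t := by
  apply Finset.sum_nonneg
  intro k _
  have := cR_nonneg n k
  have := evenpow_nonneg t k
  positivity

lemma VV_pos (n : ℕ) : 0 < VV n := by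
  unfold VV
  positivity

set_option maxHeartbeats 1600000 in
lemma lowerB (d : ℕ) (hd : 17 ≤ d) :
    ((d : ℝ) - 3) / (2 * Real.pi * Real.sqrt (VV (d - 1))) ≤ ∫ t in Set.Ioi (0 : ℝ), f d t := by
  have hd1 : 1 ≤ d := by omega
  have hd2 : 2 ≤ d := by omega
  set n := d - 1 with hn
  have hn16 : 16 ≤ n := by omega
  have hn1 : 1 ≤ n := by omega
  have hπ : (0 : ℝ) < Real.pi := Real.pi_pos
  have hsV : 0 < Real.sqrt (VV n) := Real.sqrt_pos.2 (VV_pos n)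
  set C := 2 * Real.pi * Real.sqrt (VV n) with hC
  have hC0 : 0 < C := by rw [hC]; positivity
  -- endpoints
  set KA := ∑ k ∈ range (n + 1), (k : ℝ) * cR n k with hKA
  have hKA0 : 0 ≤ KA := by
    apply Finset.sum_nonneg; intro k _
    have := cR_nonneg n k; positivity
  set av := 1 / (1 + KA) with hav
  have ha0 : 0 < av := by rw [hav]; positivity
  have ha1 : av ≤ 1 := by
    rw [hav, div_le_one (by linarith)]; linarith
  set KB := ∑ k ∈ range (n + 1), ((n - k : ℕ) : ℝ) * cR n k with hKB
  have hKB0 : 0 ≤ KB := by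
    apply Finset.sum_nonneg; intro k _
    have := cR_nonneg n k; positivity
  set bv := 1 + Real.sqrt KB with hbv
  have hb1 : 1 ≤ bv := by rw [hbv]; have := Real.sqrt_nonneg KB; linarith
  have hb0 : 0 < bv := lt_of_lt_of_le one_pos hb1
  have hab : av ≤ bv := le_trans ha1 hb1
  -- mu at endpoints
  have mu_a : G1 n av / G0 n av ≤ 1 := by
    have hG1a : G1 n av ≤ KA * av ^ 2 := by
      rw [hKA, G1, Finset.sum_mul]
      apply Finset.sum_le_sum
      intro k _
      rcases Nat.eq_zero_or_pos k with hk | hk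
      · subst hk; simp
      · have hpow : av ^ (2 * k) ≤ av ^ 2 := pow_le_pow_of_le_one ha0.le ha1 (by omega)
        have := cR_nonneg n k
        calc (k : ℝ) * cR n k * av ^ (2 * k) ≤ (k : ℝ) * cR n k * av ^ 2 := by
              apply mul_le_mul_of_nonneg_left hpow (by positivity)
          _ = (k : ℝ) * cR n k * av ^ 2 := rfl
    have h1 : G1 n av / G0 n av ≤ G1 n av :=
      div_le_self (G1_nonneg n av) (G0_ge_one n av)
    have h2 : KA * av ^ 2 ≤ 1 := by
      rw [hav, div_pow, one_pow, mul_one_div, div_le_one (by positivity)]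
      nlinarith
    linarith
  have mu_b : (n : ℝ) - 1 ≤ G1 n bv / G0 n bv := by
    have hnum : (n : ℝ) * G0 n bv - G1 n bv
        = ∑ k ∈ range (n + 1), ((n - k : ℕ) : ℝ) * cR n k * bv ^ (2 * k) := by
      rw [G0, G1, Finset.mul_sum, ← Finset.sum_sub_distrib]
      apply Finset.sum_congr rfl
      intro k hk
      simp only [Finset.mem_range] at hk
      have : ((n - k : ℕ) : ℝ) = (n : ℝ) - k := by rw [Nat.cast_sub (by omega)]
      rw [this]; ring
    have hnumle : (n : ℝ) * G0 n bv - G1 n bv ≤ KB * bv ^ (2 * n - 2) := by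
      rw [hnum, hKB, Finset.sum_mul]
      apply Finset.sum_le_sum
      intro k hk
      simp only [Finset.mem_range] at hk
      rcases Nat.eq_or_lt_of_le (Nat.lt_succ_iff.1 hk) with hkn | hkn
      · rw [hkn]; simp
      · have h2k : 2 * k ≤ 2 * n - 2 := by omega
        have hpow : bv ^ (2 * k) ≤ bv ^ (2 * n - 2) := pow_le_pow_right₀ hb1 h2k
        have := cR_nonneg n k
        calc ((n - k : ℕ) : ℝ) * cR n k * bv ^ (2 * k)
            ≤ ((n - k : ℕ) : ℝ) * cR n k * bv ^ (2 * n - 2) := by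
              apply mul_le_mul_of_nonneg_left hpow (by positivity)
          _ = ((n - k : ℕ) : ℝ) * cR n k * bv ^ (2 * n - 2) := rfl
    have hKBb : KB ≤ bv ^ 2 := by
      have hsq := Real.sq_sqrt hKB0
      have hs0 := Real.sqrt_nonneg KB
      rw [hbv]
      nlinarith
    have hfin : KB * bv ^ (2 * n - 2) ≤ G0 n bv := by
      have h1 : KB * bv ^ (2 * n - 2) ≤ bv ^ 2 * bv ^ (2 * n - 2) := by
        apply mul_le_mul_of_nonneg_right hKBb (by positivity)
      have h2 : bv ^ 2 * bv ^ (2 * n - 2) = bv ^ (2 * n) := by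
        rw [← pow_add]; congr 1; omega
      have h3 := G0_ge_pow n bv
      linarith
    have hG0pos := G0_pos n bv
    rw [le_div_iff₀ hG0pos]
    linarith
  -- pointwise bound
  have hcomp : ∀ t ∈ Set.Icc av bv,
      (2 * QQ n t / (t * (G0 n t) ^ 2)) / C ≤ f d t := by
    intro t htm
    simp only [Set.mem_Icc] at htm
    have ht0 : 0 < t := lt_of_lt_of_le ha0 htm.1
    rw [f_eq d hd1 t ht0, ← hn]
    have hq0 := QQ_nonneg n t
    have hG0 := G0_pos n t
    have hQle := Q_le n hn16 t
    have hsq : Real.sqrt (QQ n t) ≤ Real.sqrt (VV n) * G0 n t := by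
      have step := Real.sqrt_le_sqrt hQle
      rwa [Real.sqrt_mul (VV_pos n).le, Real.sqrt_sq hG0.le] at step
    have e1 : (2 * QQ n t / (t * (G0 n t) ^ 2)) / C
        = QQ n t / (Real.pi * Real.sqrt (VV n) * t * (G0 n t) ^ 2) := by
      rw [hC]
      field_simp
    rw [e1, div_le_div_iff₀ (by positivity) (by positivity)]
    have h2 : QQ n t ≤ Real.sqrt (QQ n t) * (Real.sqrt (VV n) * G0 n t) := by
      have hstep := mul_le_mul_of_nonneg_left hsq (Real.sqrt_nonneg (QQ n t))
      rwa [Real.mul_self_sqrt hq0] at hstep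
    calc QQ n t * (Real.pi * t * G0 n t)
        ≤ (Real.sqrt (QQ n t) * (Real.sqrt (VV n) * G0 n t)) * (Real.pi * t * G0 n t) := by
          apply mul_le_mul_of_nonneg_right h2 (by positivity)
      _ = Real.sqrt (QQ n t) * (Real.pi * Real.sqrt (VV n) * t * (G0 n t) ^ 2) := by ring
  -- derivative and integrability
  have hder : ∀ t ∈ Set.uIcc av bv,
      HasDerivAt (fun t => (G1 n t / G0 n t) / C)
        ((2 * QQ n t / (t * (G0 n t) ^ 2)) / C) t := by
    intro t htm
    rw [Set.uIcc_of_le hab] at htm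
    have ht0 : 0 < t := lt_of_lt_of_le ha0 htm.1
    exact (mu_deriv n t ht0).div_const C
  have hphicont : ContinuousOn (fun t => (2 * QQ n t / (t * (G0 n t) ^ 2)) / C)
      (Set.uIcc av bv) := by
    apply ContinuousOn.div_const
    apply ContinuousOn.div
    · exact (continuous_const.mul (QQ_cont n)).continuousOn
    · exact (continuous_id.mul ((G0_cont n).pow 2)).continuousOn
    · intro t htm
      rw [Set.uIcc_of_le hab] at htm
      have ht0 : 0 < t := lt_of_lt_of_le ha0 htm.1
      have := G0_pos n t
      positivity
  have hphiint : IntervalIntegrable (fun t => (2 * QQ n t / (t * (G0 n t) ^ 2)) / C)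
      volume av bv := hphicont.intervalIntegrable
  have hfint : IntervalIntegrable (fun t => f d t) volume av bv :=
    (f_cont d hd1).intervalIntegrable av bv
  have hFTC := intervalIntegral.integral_eq_sub_of_hasDerivAt hder hphiint
  have hmono := intervalIntegral.integral_mono_on hab hphiint hfint hcomp
  -- from interval to Ioi
  have hIoi : ∫ t in av..bv, f d t ≤ ∫ t in Set.Ioi (0 : ℝ), f d t := by
    rw [intervalIntegral.integral_of_le hab]
    apply setIntegral_mono_set (f_int d hd2)
    · apply Filter.Eventually.of_forall
      intro x
      exact f_nonneg d hd1 x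
    · apply HasSubset.Subset.eventuallyLE
      intro x hx
      exact lt_trans ha0 hx.1
  -- assemble
  have hval : (G1 n bv / G0 n bv) / C - (G1 n av / G0 n av) / C
      ≤ ∫ t in av..bv, f d t := by
    rw [← hFTC]
    exact hmono
  have hnm : ((n : ℝ) - 2) / C ≤ ∫ t in av..bv, f d t := by
    have hdiff : (n : ℝ) - 2 ≤ G1 n bv / G0 n bv - G1 n av / G0 n av := by
      linarith
    have hstep : ((n : ℝ) - 2) / C ≤ (G1 n bv / G0 n bv - G1 n av / G0 n av) / C := by
      gcongr
    have heq : (G1 n bv / G0 n bv - G1 n av / G0 n av) / C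
        = (G1 n bv / G0 n bv) / C - (G1 n av / G0 n av) / C := sub_div _ _ _
    linarith [hval]
  have hcast : (n : ℝ) = (d : ℝ) - 1 := by
    rw [hn, Nat.cast_sub hd1, Nat.cast_one]
  have hfinal : ((d : ℝ) - 3) / C ≤ ∫ t in av..bv, f d t := by
    rw [show (d : ℝ) - 3 = (n : ℝ) - 2 from by rw [hcast]; ring]
    exact hnm
  calc ((d : ℝ) - 3) / C ≤ ∫ t in av..bv, f d t := hfinal
    _ ≤ ∫ t in Set.Ioi (0 : ℝ), f d t := hIoi

lemma VV_le (n : ℕ) (hn : 16 ≤ n) : VV n ≤ 465 * ((n : ℝ) * Real.sqrt n) := by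
  obtain ⟨hD4, hDn⟩ := sqrt_facts n hn
  set e := (n.sqrt : ℝ) with he
  have he4 : (4 : ℝ) ≤ e := by rw [he]; exact_mod_cast hD4
  have he0 : (0 : ℝ) < e := by linarith
  have he2 : e ^ 2 ≤ (n : ℝ) := by
    rw [he]
    exact_mod_cast Nat.sqrt_le' n
  have hen : (n : ℝ) ≤ (e + 1) ^ 2 := by
    have h := Nat.lt_succ_sqrt' n
    have : (n : ℝ) < ((n.sqrt + 1 : ℕ) : ℝ) ^ 2 := by exact_mod_cast h
    push_cast at this
    linarith
  have hes : e ≤ Real.sqrt n := by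
    rw [Real.le_sqrt he0.le (Nat.cast_nonneg n)]
    exact he2
  have hu : (n : ℝ) / e ≤ 25 / 16 * e := by
    rw [div_le_iff₀ he0]
    nlinarith
  have hu0 : (0 : ℝ) ≤ (n : ℝ) / e := by positivity
  have t1 : (2 * e + 1) ^ 2 ≤ 81 / 16 * e ^ 2 := by nlinarith
  have t2 : (2 * e + 3) ^ 2 ≤ 121 / 16 * e ^ 2 := by nlinarith
  have t3 : ((n : ℝ) / e) ^ 3 ≤ (25 / 16 * e) ^ 3 := pow_le_pow_left₀ hu0 hu 3
  have t4 : e ^ 2 ≤ e ^ 3 / 4 := by nlinarith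
  have t5 : (2 * e + 3) ^ 2 * ((n : ℝ) / e) ≤ (121 / 16 * e ^ 2) * (25 / 16 * e) := by
    apply mul_le_mul t2 hu hu0 (by positivity)
  have hprod : e ^ 2 * e ≤ (n : ℝ) * Real.sqrt n := by
    apply mul_le_mul he2 hes he0.le (Nat.cast_nonneg n)
  rw [VV, ← he]
  nlinarith [t1, t3, t4, t5, hprod]

lemma sqrt_tendsto : Filter.Tendsto Real.sqrt Filter.atTop Filter.atTop := by
  rw [Filter.tendsto_atTop_atTop]
  intro C
  refine ⟨(max C 0) ^ 2, fun x hx => ?_⟩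
  calc C ≤ max C 0 := le_max_left _ _
    _ = Real.sqrt ((max C 0) ^ 2) := (Real.sqrt_sq (le_max_right C 0)).symm
    _ ≤ Real.sqrt x := Real.sqrt_le_sqrt hx


set_option maxHeartbeats 1000000 in
theorem stmt_10 :
    Filter.Tendsto (fun d : ℕ => ∫ t in Set.Ioi (0 : ℝ), f d t) Filter.atTop Filter.atTop := by
  apply Filter.tendsto_atTop_mono'
    (f₁ := fun d : ℕ => Real.sqrt (Real.sqrt ((d : ℝ) - 1)) * (1 / (88 * Real.pi)))
  · rw [Filter.EventuallyLE, Filter.eventually_atTop]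
    refine ⟨17, fun d hd => ?_⟩
    have hd1 : 1 ≤ d := by omega
    set n := d - 1 with hn
    have hn16 : 16 ≤ n := by omega
    have hπ := Real.pi_pos
    have hcast : ((d : ℝ) - 1) = (n : ℝ) := by
      rw [hn, Nat.cast_sub hd1, Nat.cast_one]
    have hn16' : (16 : ℝ) ≤ (n : ℝ) := by exact_mod_cast hn16
    set s := Real.sqrt (n : ℝ) with hs
    set s2 := Real.sqrt s with hs2
    have hs4 : (4 : ℝ) ≤ s := by
      rw [hs]
      rw [show (4 : ℝ) = Real.sqrt 16 from by
        rw [show (16 : ℝ) = 4 ^ 2 from by norm_num, Real.sqrt_sq (by norm_num)]]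
      exact Real.sqrt_le_sqrt hn16'
    have hs0 : (0 : ℝ) < s := by linarith
    have hs22 : (2 : ℝ) ≤ s2 := by
      rw [hs2]
      rw [show (2 : ℝ) = Real.sqrt 4 from by
        rw [show (4 : ℝ) = 2 ^ 2 from by norm_num, Real.sqrt_sq (by norm_num)]]
      exact Real.sqrt_le_sqrt hs4
    have hs20 : (0 : ℝ) < s2 := by linarith
    have s2sq : s2 ^ 2 = s := Real.sq_sqrt hs0.le
    have ssq : s ^ 2 = (n : ℝ) := Real.sq_sqrt (Nat.cast_nonneg n)
    -- bound on sqrt VV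
    have hVle := VV_le n hn16
    have hsqV : Real.sqrt (VV n) ≤ 22 * (s * s2) := by
      have step1 := Real.sqrt_le_sqrt hVle
      have e1 : Real.sqrt (465 * ((n : ℝ) * s)) = Real.sqrt 465 * Real.sqrt ((n : ℝ) * s) := by
        rw [Real.sqrt_mul (by norm_num)]
      have e2 : Real.sqrt ((n : ℝ) * s) = s * s2 := by
        rw [← ssq, Real.sqrt_mul (sq_nonneg s), Real.sqrt_sq hs0.le, ← hs2]
      have e3 : Real.sqrt 465 ≤ 22 := by
        rw [show (22 : ℝ) = Real.sqrt (22 ^ 2) from (Real.sqrt_sq (by norm_num)).symm]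
        apply Real.sqrt_le_sqrt
        norm_num
      calc Real.sqrt (VV n) ≤ Real.sqrt (465 * ((n : ℝ) * s)) := step1
        _ = Real.sqrt 465 * (s * s2) := by rw [e1, e2]
        _ ≤ 22 * (s * s2) := by
            apply mul_le_mul_of_nonneg_right e3 (by positivity)
    have hL := lowerB d hd
    have hd3 : (n : ℝ) / 2 ≤ (d : ℝ) - 3 := by
      have : (n : ℝ) = (d : ℝ) - 1 := hcast.symm
      linarith
    have hden : 2 * Real.pi * Real.sqrt (VV n) ≤ 44 * Real.pi * (s * s2) := by
      have h1 : 2 * Real.pi * Real.sqrt (VV n) ≤ 2 * Real.pi * (22 * (s * s2)) := by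
        apply mul_le_mul_of_nonneg_left hsqV (by positivity)
      linarith [h1]
    have hsV0 : 0 < Real.sqrt (VV n) := Real.sqrt_pos.2 (VV_pos n)
    have key : ((n : ℝ) / 2) / (44 * Real.pi * (s * s2))
        ≤ ((d : ℝ) - 3) / (2 * Real.pi * Real.sqrt (VV n)) := by
      apply div_le_div₀ (by linarith) hd3 (by positivity) hden
    have heqv : ((n : ℝ) / 2) / (44 * Real.pi * (s * s2)) = s2 * (1 / (88 * Real.pi)) := by
      have hn_s2 : (n : ℝ) = s2 ^ 4 := by
        rw [← ssq, ← s2sq]; ring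
      rw [hn_s2, ← s2sq]
      field_simp
      ring
    have hfin : Real.sqrt (Real.sqrt ((d : ℝ) - 1)) * (1 / (88 * Real.pi))
        = s2 * (1 / (88 * Real.pi)) := by
      rw [hcast, ← hs, ← hs2]
    rw [hfin]
    calc s2 * (1 / (88 * Real.pi))
        = ((n : ℝ) / 2) / (44 * Real.pi * (s * s2)) := heqv.symm
      _ ≤ ((d : ℝ) - 3) / (2 * Real.pi * Real.sqrt (VV n)) := key
      _ ≤ ∫ t in Set.Ioi (0 : ℝ), f d t := hL
  · apply Filter.Tendsto.atTop_mul_const (by positivity : (0 : ℝ) < 1 / (88 * Real.pi))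
    have h1 : Filter.Tendsto (fun d : ℕ => (d : ℝ) - 1) Filter.atTop Filter.atTop := by
      simp only [sub_eq_add_neg]
      exact Filter.tendsto_atTop_add_const_right _ _ tendsto_natCast_atTop_atTop
    exact sqrt_tendsto.comp (sqrt_tendsto.comp h1)
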